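/- Conversely, given a 3-dimensional matching M of R with |M| = K, assigning flow k to the triple (x^k, y^k, z^k) ∈ M yields a feasible instantiation: each function node provides exactly one function for exactly one flow, so all node capacity constraints μ_i ≥ λ are satisfied, and since the links (x^k,y^k) and (y^k,z^k) exist (as (x^k,y^k,z^k) ∈ R) and link capacities are at least 4Kλ, a feasible routing exists. -/

import Mathlib

open Finset

structure NSInstance where
  Node : Type
  [fintypeNode : Fintype Node]
  [decEqNode : DecidableEq Node]
  Fn : Type
  L : Finset (Node × Node)
  C : Node × Node → ℝ
  mu : Node → ℝ
  K : ℕ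
  Vf : Fn → Finset Node
  S : Fin K → Node
  D : Fin K → Node
  lam : Fin K → ℝ
  chain : Fin K → List Fn

attribute [instance] NSInstance.fintypeNode NSInstance.decEqNode

namespace NSInstance

def FeasibleWith (I : NSInstance) (y : Fin I.K → ℕ → I.Node)
    (r : Fin I.K → ℕ → I.Node × I.Node → ℝ) : Prop :=
  (∀ k, ∀ s : Fin (I.chain k).length, y k s.val ∈ I.Vf ((I.chain k).get s)) ∧
  (∀ k, ∀ s s' : Fin (I.chain k).length, y k s.val = y k s'.val → s = s') ∧
  (∀ k s l, 0 ≤ r k s l) ∧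
  (∀ k s l, l ∉ I.L → r k s l = 0) ∧
  (∀ k, ∀ s ≤ (I.chain k).length, ∀ i : I.Node,
    (∑ j : I.Node, r k s (i, j)) - (∑ j : I.Node, r k s (j, i)) =
      (if i = (if s = 0 then I.S k else y k (s - 1)) then I.lam k else 0) -
      (if i = (if s = (I.chain k).length then I.D k else y k s) then I.lam k else 0)) ∧
  (∀ l ∈ I.L, (∑ k : Fin I.K, ∑ s ∈ Finset.range ((I.chain k).length + 1), r k s l)
      ≤ I.C l) ∧
  (∀ i : I.Node, (∑ k : Fin I.K, ∑ s ∈ Finset.range (I.chain k).length,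
      (if y k s = i then I.lam k else 0)) ≤ I.mu i)

def Feasible (I : NSInstance) : Prop := ∃ y r, I.FeasibleWith y r

end NSInstance

/-- The network constructed in the NP-hardness proof from a 3DM instance
`R ⊆ X × Y × Z` (with `X = Y = Z = Fin K`): nodes are five groups
`S ∪ X ∪ Y ∪ Z ∪ D` (group `g` is `({g} × Fin K)`), functions are
`F₁ ∪ F₂ ∪ F₃` (flow `k` has chain `(f₁ᵏ, f₂ᵏ, f₃ᵏ)`, pairwise distinct across
flows), `V_f = X, Y, Z` for `f ∈ F₁, F₂, F₃` respectively, links are all `(s,x)`,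
all `(z,d)`, and `(x,y), (y,z)` for each `(x,y,z) ∈ R`, all flows have rate `lam`,
link capacities `4 K lam`, and function-node capacities `lam ∈ [lam, 2 lam)`. -/
def construct (K : ℕ) (lam : ℝ) (R : Finset (Fin K × Fin K × Fin K)) : NSInstance where
  Node := Fin 5 × Fin K
  Fn := Fin 3 × Fin K
  L :=
    ((Finset.univ : Finset (Fin K × Fin K)).image
        fun sx => (((0 : Fin 5), sx.1), ((1 : Fin 5), sx.2))) ∪
    (R.image fun t => (((1 : Fin 5), t.1), ((2 : Fin 5), t.2.1))) ∪
    (R.image fun t => (((2 : Fin 5), t.2.1), ((3 : Fin 5), t.2.2))) ∪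
    ((Finset.univ : Finset (Fin K × Fin K)).image
        fun zd => (((3 : Fin 5), zd.1), ((4 : Fin 5), zd.2)))
  C := fun _ => 4 * K * lam
  mu := fun _ => lam
  K := K
  Vf := fun f => (Finset.univ : Finset (Fin K)).image
      fun i => ((⟨f.1.val + 1, by omega⟩ : Fin 5), i)
  S := fun k => ((0 : Fin 5), k)
  D := fun k => ((4 : Fin 5), k)
  lam := fun _ => lam
  chain := fun k => [((0 : Fin 3), k), ((1 : Fin 3), k), ((2 : Fin 3), k)]

/-- The edge used by flow `k` on segment `s` in the constructed routing. -/
def edgeOf (K : ℕ) (e : Fin K → Fin K × Fin K × Fin K) (k : Fin K) :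
    ℕ → (Fin 5 × Fin K) × (Fin 5 × Fin K)
  | 0 => (((0 : Fin 5), k), ((1 : Fin 5), (e k).1))
  | 1 => (((1 : Fin 5), (e k).1), ((2 : Fin 5), (e k).2.1))
  | 2 => (((2 : Fin 5), (e k).2.1), ((3 : Fin 5), (e k).2.2))
  | _ => (((3 : Fin 5), (e k).2.2), ((4 : Fin 5), k))

lemma sum_pair_eq {γ : Type*} [Fintype γ] [DecidableEq γ] (i a b : γ) (lam : ℝ) :
    (∑ j : γ, if i = a ∧ j = b then lam else 0) = if i = a then lam else 0 := by
  by_cases h : i = a <;> simp [h]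

lemma sum_ite_le {α β : Type*} [DecidableEq α] [DecidableEq β] (s : Finset α) (f : α → β)
    (i : β) (lam : ℝ) (hlam : 0 ≤ lam)
    (hinj : ∀ a ∈ s, ∀ b ∈ s, f a = f b → a = b) :
    (∑ x ∈ s, if f x = i then lam else 0) ≤ lam := by
  classical
  rw [Finset.sum_ite, Finset.sum_const, Finset.sum_const_zero, add_zero]
  have hcard : (s.filter fun x => f x = i).card ≤ 1 := by
    apply Finset.card_le_one.mpr
    intro a ha b hb
    simp only [Finset.mem_filter] at ha hb
    exact hinj a ha.1 b hb.1 (ha.2.trans hb.2.symm)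
  calc (s.filter fun x => f x = i).card • lam ≤ 1 • lam := nsmul_le_nsmul_left hlam hcard
    _ = lam := one_smul _ _

set_option maxHeartbeats 2000000 in
/-- Conversely, given a 3-dimensional matching `M ⊆ R` with `|M| = K`
(enumerated by an injection `e : Fin K → M`), assigning flow `k` to the triple
`e k = (xᵏ, yᵏ, zᵏ)` yields a feasible instantiation of the constructed network:
there is a routing `r` such that this instantiation together with `r` satisfies all
constraints (each function node provides exactly one function for exactly one flow,
so node capacities `μ = lam ≥ lam` are respected, and since links `(xᵏ,yᵏ)` and
`(yᵏ,zᵏ)` exist and link capacities are `4 K lam`, a feasible routing exists). -/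
theorem stmt13 (K : ℕ) (lam : ℝ) (hlam : 0 < lam)
    (R M : Finset (Fin K × Fin K × Fin K)) (hMR : M ⊆ R) (hMcard : M.card = K)
    (hmatch : ∀ t ∈ M, ∀ t' ∈ M, t ≠ t' →
      t.1 ≠ t'.1 ∧ t.2.1 ≠ t'.2.1 ∧ t.2.2 ≠ t'.2.2)
    (e : Fin K → Fin K × Fin K × Fin K) (he : ∀ k, e k ∈ M)
    (hinj : Function.Injective e) :
    ∃ r, (construct K lam R).FeasibleWith
      (fun k s =>
        if s = 0 then (((1 : Fin 5), (e k).1) : Fin 5 × Fin K)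
        else if s = 1 then ((2 : Fin 5), (e k).2.1)
        else ((3 : Fin 5), (e k).2.2)) r := by
  classical
  have hcoord1 : ∀ k k', (e k).1 = (e k').1 → k = k' := by
    intro k k' h
    by_contra hne
    exact (hmatch _ (he k) _ (he k') fun hek => hne (hinj hek)).1 h
  have hcoord2 : ∀ k k', (e k).2.1 = (e k').2.1 → k = k' := by
    intro k k' h
    by_contra hne
    exact (hmatch _ (he k) _ (he k') fun hek => hne (hinj hek)).2.1 h
  have hcoord3 : ∀ k k', (e k).2.2 = (e k').2.2 → k = k' := by
    intro k k' h
    by_contra hne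
    exact (hmatch _ (he k) _ (he k') fun hek => hne (hinj hek)).2.2 h
  refine ⟨fun k s l => if s ≤ 3 ∧ l = edgeOf K e k s then lam else 0,
    ?_, ?_, ?_, ?_, ?_, ?_, ?_⟩
  · -- placement
    intro k s
    fin_cases s <;> simp [construct] <;> exact Finset.mem_image.mpr ⟨_, Finset.mem_univ _, rfl⟩
  · -- distinct placements within a flow
    intro k s s' h
    fin_cases s <;> fin_cases s' <;>
      first
      | rfl
      | (exfalso; simp at h; injection h with h1 h2; exact absurd h1 (by decide))
  · -- nonnegativity
    intro k s l
    dsimp only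
    split <;> simp [hlam.le]
  · -- support in L
    intro k s l hl
    dsimp only
    split
    · next h =>
      exfalso
      apply hl
      obtain ⟨hs, rfl⟩ := h
      have hR : e k ∈ R := hMR (he k)
      interval_cases s <;>
        simp [construct, edgeOf, Finset.mem_union, Finset.mem_image] <;>
        first
        | exact ⟨(e k).2.2, hR⟩
        | exact ⟨(e k).1, hR⟩
        | exact hR
        | exact Finset.mem_union_left _ (Finset.mem_image.mpr ⟨(k, (e k).1), Finset.mem_univ _, rfl⟩)
        | exact Finset.mem_union_right _ (Finset.mem_union_left _ (Finset.mem_image.mpr ⟨_, hR, rfl⟩))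
        | exact Finset.mem_union_right _ (Finset.mem_union_right _ (Finset.mem_union_left _ (Finset.mem_image.mpr ⟨_, hR, rfl⟩)))
        | exact Finset.mem_union_right _ (Finset.mem_union_right _ (Finset.mem_union_right _ (Finset.mem_image.mpr ⟨((e k).2.2, k), Finset.mem_univ _, rfl⟩)))
    · rfl
  · -- flow conservation
    intro k s hs i
    have hlen : ((construct K lam R).chain k).length = 3 := rfl
    rw [hlen] at hs
    change Fin 5 × Fin K at i
    have key : ∀ a b : Fin 5 × Fin K, s ≤ 3 →
        ((∑ j : Fin 5 × Fin K, if s ≤ 3 ∧ (i, j) = (a, b) then lam else 0) -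
         (∑ j : Fin 5 × Fin K, if s ≤ 3 ∧ (j, i) = (a, b) then lam else 0)) =
        (if i = a then lam else 0) - (if i = b then lam else 0) := by
      intro a b hs3
      have h1 : (∑ j : Fin 5 × Fin K, if s ≤ 3 ∧ (i, j) = (a, b) then lam else 0) =
          if i = a then lam else 0 := by
        simp only [hs3, true_and, Prod.mk.injEq]
        by_cases hia : i = a <;> simp [hia]
      have h2 : (∑ j : Fin 5 × Fin K, if s ≤ 3 ∧ (j, i) = (a, b) then lam else 0) =
          if i = b then lam else 0 := by
        simp only [hs3, true_and, Prod.mk.injEq]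
        by_cases hib : i = b <;> simp [hib]
      rw [h1, h2]
    have key' := key (edgeOf K e k s).1 (edgeOf K e k s).2 hs
    interval_cases s <;>
      (simp [construct, edgeOf] at key' ⊢; convert key' using 3 <;> rfl)
  · -- link capacities
    intro l hl
    have hlen : ∀ k : Fin K, ((construct K lam R).chain k).length = 3 := fun _ => rfl
    calc (∑ k : Fin K, ∑ s ∈ Finset.range (((construct K lam R).chain k).length + 1),
            if s ≤ 3 ∧ l = edgeOf K e k s then lam else 0)
        ≤ ∑ _k : Fin K, 4 * lam := by
          refine Finset.sum_le_sum fun k _ => ?_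
          rw [hlen]
          calc (∑ s ∈ Finset.range 4, if s ≤ 3 ∧ l = edgeOf K e k s then lam else 0)
              ≤ ∑ _s ∈ Finset.range 4, lam :=
                Finset.sum_le_sum fun s _ => by split <;> simp [hlam.le]
            _ = 4 * lam := by simp [Finset.sum_const, nsmul_eq_mul]
      _ = K * (4 * lam) := by simp [Finset.sum_const, nsmul_eq_mul]
      _ ≤ 4 * K * lam := by nlinarith
  · -- node capacities
    intro i
    change Fin 5 × Fin K at i
    refine le_trans (le_of_eq (Finset.sum_product (Finset.univ : Finset (Fin K))
      (Finset.range 3) fun p =>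
        if (if p.2 = 0 then (((1 : Fin 5), (e p.1).1) : Fin 5 × Fin K)
            else if p.2 = 1 then ((2 : Fin 5), (e p.1).2.1)
            else ((3 : Fin 5), (e p.1).2.2)) = i then lam else 0).symm) ?_
    refine le_trans (sum_ite_le _ _ i lam hlam.le ?_) le_rfl
    rintro ⟨k, s⟩ hks ⟨k', s'⟩ hks' h
    simp only [Finset.mem_product, Finset.mem_range, Finset.mem_univ, true_and] at hks hks'
    interval_cases s <;> interval_cases s' <;>
      first
      | (simp at h ⊢
         injection h with h1 h2
         first
         | exact hcoord1 _ _ h2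
         | exact hcoord2 _ _ h2
         | exact hcoord3 _ _ h2)
      | (simp at h ⊢
         first
         | exact hcoord1 _ _ h
         | exact hcoord2 _ _ h
         | exact hcoord3 _ _ h)
      | (exfalso; simp at h)
      | (exfalso; simp at h; injection h with h1 h2; exact absurd h1 (by decide))
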